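/- For real x, y, z > 0, R_D(x,y,z) + R_D(y,z,x) + R_D(z,x,y) = 3 / (√x √y √z). -/

import Mathlib

open MeasureTheory Real

noncomputable def RC (x y : ℝ) : ℝ :=
  (1/2) * ∫ t in Set.Ioi (0:ℝ), (Real.sqrt (t + x))⁻¹ * (t + y)⁻¹

noncomputable def RF (x y z : ℝ) : ℝ :=
  (1/2) * ∫ t in Set.Ioi (0:ℝ), (Real.sqrt ((t + x) * (t + y) * (t + z)))⁻¹

noncomputable def RD (x y z : ℝ) : ℝ :=
  (3/2) * ∫ t in Set.Ioi (0:ℝ),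
    (Real.sqrt ((t + x) * (t + y)))⁻¹ * ((t + z) * Real.sqrt (t + z))⁻¹

noncomputable def RJ (x y z p : ℝ) : ℝ :=
  (3/2) * ∫ t in Set.Ioi (0:ℝ),
    (Real.sqrt ((t + x) * (t + y) * (t + z)))⁻¹ * (t + p)⁻¹

noncomputable def RG (x y z : ℝ) : ℝ :=
  (1/4) * ∫ t in Set.Ioi (0:ℝ),
    (Real.sqrt ((t + x) * (t + y) * (t + z)))⁻¹ *
      (x / (t + x) + y / (t + y) + z / (t + z)) * t

lemma key_deriv (x y z : ℝ) (hx : 0 < x) (hy : 0 < y) (hz : 0 < z) (t : ℝ) (ht : 0 ≤ t) :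
    HasDerivAt (fun s => -2 * (Real.sqrt ((s+x)*(s+y)*(s+z)))⁻¹)
      ((Real.sqrt ((t + x) * (t + y)))⁻¹ * ((t + z) * Real.sqrt (t + z))⁻¹
       + (Real.sqrt ((t + y) * (t + z)))⁻¹ * ((t + x) * Real.sqrt (t + x))⁻¹
       + (Real.sqrt ((t + z) * (t + x)))⁻¹ * ((t + y) * Real.sqrt (t + y))⁻¹) t := by
  have ha : 0 < t + x := by linarith
  have hb : 0 < t + y := by linarith
  have hc : 0 < t + z := by linarith
  have hu : 0 < (t+x)*(t+y)*(t+z) := by positivity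
  have h1 : HasDerivAt (fun s : ℝ => (s+x)*(s+y)*(s+z))
      ((t+y)*(t+z)+(t+x)*(t+z)+(t+x)*(t+y)) t := by
    have := (((hasDerivAt_id t).add_const x).mul ((hasDerivAt_id t).add_const y)).mul
      ((hasDerivAt_id t).add_const z)
    refine this.congr_deriv ?_; simp only [id_eq, Pi.mul_apply]; ring
  have h2 : HasDerivAt (fun s : ℝ => Real.sqrt ((s+x)*(s+y)*(s+z)))
      (((t+y)*(t+z)+(t+x)*(t+z)+(t+x)*(t+y)) / (2 * Real.sqrt ((t+x)*(t+y)*(t+z)))) t := by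
    have := (Real.hasDerivAt_sqrt hu.ne').comp t h1
    refine this.congr_deriv ?_; ring
  have hsne : Real.sqrt ((t+x)*(t+y)*(t+z)) ≠ 0 := (Real.sqrt_pos.2 hu).ne'
  have h3 := (h2.inv hsne).const_mul (-2 : ℝ)
  refine h3.congr_deriv ?_
  rw [Real.sqrt_mul (mul_nonneg ha.le hb.le) (t+z), Real.sqrt_mul ha.le (t+y),
    Real.sqrt_mul hb.le (t+z), Real.sqrt_mul hc.le (t+x)]
  set sa := Real.sqrt (t+x) with hsa
  set sb := Real.sqrt (t+y) with hsb
  set sc := Real.sqrt (t+z) with hsc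
  have ha2 : sa^2 = t + x := Real.sq_sqrt ha.le
  have hb2 : sb^2 = t + y := Real.sq_sqrt hb.le
  have hc2 : sc^2 = t + z := Real.sq_sqrt hc.le
  have hsa0 : 0 < sa := Real.sqrt_pos.2 ha
  have hsb0 : 0 < sb := Real.sqrt_pos.2 hb
  have hsc0 : 0 < sc := Real.sqrt_pos.2 hc
  rw [← ha2, ← hb2, ← hc2]
  field_simp
  ring

theorem stmt8 (x y z : ℝ) (hx : 0 < x) (hy : 0 < y) (hz : 0 < z) :
    RD x y z + RD y z x + RD z x y =
      3 / (Real.sqrt x * Real.sqrt y * Real.sqrt z) := by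
  simp only [RD]
  set f1 : ℝ → ℝ := fun t => (Real.sqrt ((t + x) * (t + y)))⁻¹ * ((t + z) * Real.sqrt (t + z))⁻¹ with hf1
  set f2 : ℝ → ℝ := fun t => (Real.sqrt ((t + y) * (t + z)))⁻¹ * ((t + x) * Real.sqrt (t + x))⁻¹ with hf2
  set f3 : ℝ → ℝ := fun t => (Real.sqrt ((t + z) * (t + x)))⁻¹ * ((t + y) * Real.sqrt (t + y))⁻¹ with hf3
  have hderiv : ∀ t ∈ Set.Ici (0:ℝ),
      HasDerivAt (fun s => -2 * (Real.sqrt ((s+x)*(s+y)*(s+z)))⁻¹) (f1 t + f2 t + f3 t) t :=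
    fun t ht => key_deriv x y z hx hy hz t ht
  have hnn : ∀ i ∈ Set.Ioi (0:ℝ), ∀ f ∈ [f1, f2, f3], 0 ≤ f i := by
    intro i hi f hf
    have hi' : (0:ℝ) ≤ i := (Set.mem_Ioi.1 hi).le
    fin_cases hf <;> positivity
  have hnn1 : ∀ t ∈ Set.Ioi (0:ℝ), 0 ≤ f1 t := fun t ht => hnn t ht f1 (by simp)
  have hnn2 : ∀ t ∈ Set.Ioi (0:ℝ), 0 ≤ f2 t := fun t ht => hnn t ht f2 (by simp)
  have hnn3 : ∀ t ∈ Set.Ioi (0:ℝ), 0 ≤ f3 t := fun t ht => hnn t ht f3 (by simp)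
  have hpos : ∀ t ∈ Set.Ioi (0:ℝ), 0 ≤ f1 t + f2 t + f3 t := by
    intro t ht
    have := hnn1 t ht; have := hnn2 t ht; have := hnn3 t ht; linarith
  have htend : Filter.Tendsto (fun s => -2 * (Real.sqrt ((s+x)*(s+y)*(s+z)))⁻¹)
      Filter.atTop (nhds 0) := by
    have h1 : Filter.Tendsto (fun s : ℝ => (s+x)*(s+y)*(s+z)) Filter.atTop Filter.atTop := by
      exact (((Filter.tendsto_atTop_add_const_right _ x Filter.tendsto_id).atTop_mul_atTop₀
        (Filter.tendsto_atTop_add_const_right _ y Filter.tendsto_id)).atTop_mul_atTop₀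
        (Filter.tendsto_atTop_add_const_right _ z Filter.tendsto_id))
    have hsq : Filter.Tendsto Real.sqrt Filter.atTop Filter.atTop := by
      apply Filter.tendsto_atTop_atTop_of_monotone (fun a b hab => Real.sqrt_le_sqrt hab)
      exact fun b => ⟨b^2, by rw [Real.sqrt_sq_eq_abs]; exact le_abs_self b⟩
    have h2 : Filter.Tendsto (fun s : ℝ => (Real.sqrt ((s+x)*(s+y)*(s+z)))⁻¹)
        Filter.atTop (nhds 0) :=
      tendsto_inv_atTop_zero.comp (hsq.comp h1)
    have := h2.const_mul (-2 : ℝ)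
    simpa using this
  have hint : IntegrableOn (fun t => f1 t + f2 t + f3 t) (Set.Ioi (0:ℝ)) :=
    integrableOn_Ioi_deriv_of_nonneg' hderiv hpos htend
  have hmeas : ∀ f ∈ [f1, f2, f3], AEStronglyMeasurable f (volume.restrict (Set.Ioi (0:ℝ))) := by
    intro f hf
    have m : ∀ a b c : ℝ, Measurable (fun t : ℝ =>
        (Real.sqrt ((t + a) * (t + b)))⁻¹ * ((t + c) * Real.sqrt (t + c))⁻¹) := by
      intro a b c
      exact ((((measurable_id.add_const a).mul (measurable_id.add_const b)).sqrt).inv).mul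
        (((measurable_id.add_const c).mul (measurable_id.add_const c).sqrt).inv)
    fin_cases hf <;> exact (m _ _ _).aestronglyMeasurable
  have hIi : ∀ f ∈ [f1, f2, f3], IntegrableOn f (Set.Ioi (0:ℝ)) := by
    intro f hf
    refine hint.mono' (hmeas f hf) ?_
    rw [ae_restrict_iff' measurableSet_Ioi]
    filter_upwards with t ht
    have h0 := hnn t ht f hf
    have := hnn1 t ht; have := hnn2 t ht; have := hnn3 t ht
    rw [Real.norm_eq_abs, abs_of_nonneg h0]
    fin_cases hf <;> linarith
  have hI1 := hIi f1 (by simp)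
  have hI2 := hIi f2 (by simp)
  have hI3 := hIi f3 (by simp)
  have hsum : (∫ t in Set.Ioi (0:ℝ), (f1 t + f2 t + f3 t)) = 0 - (-2 * (Real.sqrt ((0+x)*(0+y)*(0+z)))⁻¹) :=
    integral_Ioi_of_hasDerivAt_of_nonneg' hderiv hpos htend
  have hsplit : (∫ t in Set.Ioi (0:ℝ), (f1 t + f2 t + f3 t))
      = (∫ t in Set.Ioi (0:ℝ), f1 t) + (∫ t in Set.Ioi (0:ℝ), f2 t) + (∫ t in Set.Ioi (0:ℝ), f3 t) := by
    have h123 := integral_add (μ := volume.restrict (Set.Ioi (0:ℝ))) (hI1.add hI2) hI3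
    simp only [Pi.add_apply] at h123
    rw [h123, integral_add hI1 hI2]
  have hval : (∫ t in Set.Ioi (0:ℝ), f1 t) + (∫ t in Set.Ioi (0:ℝ), f2 t) + (∫ t in Set.Ioi (0:ℝ), f3 t)
      = 2 * (Real.sqrt (x*y*z))⁻¹ := by
    rw [← hsplit, hsum]; simp
  rw [Real.sqrt_mul (by positivity) z, Real.sqrt_mul hx.le y] at hval
  calc (3/2) * (∫ t in Set.Ioi (0:ℝ), f1 t) + (3/2) * (∫ t in Set.Ioi (0:ℝ), f2 t)
      + (3/2) * (∫ t in Set.Ioi (0:ℝ), f3 t)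
      = (3/2) * ((∫ t in Set.Ioi (0:ℝ), f1 t) + (∫ t in Set.Ioi (0:ℝ), f2 t)
        + (∫ t in Set.Ioi (0:ℝ), f3 t)) := by ring
    _ = (3/2) * (2 * (Real.sqrt x * Real.sqrt y * Real.sqrt z)⁻¹) := by rw [hval]
    _ = 3 / (Real.sqrt x * Real.sqrt y * Real.sqrt z) := by rw [div_eq_mul_inv]; ring
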